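/- (Lemma 3) Let n₁, n₂ ≥ 1 be integers and η₀ ≤ η₁, η₂ be reals, and let E be a region of strong effect determined by data s, μ_1 > ... > μ_s > 0 and 0 < p_1 < ... < p_{s+1} = 1. Then the two-stage type II error probability β₂ attains its maximum over E at a corner: for every (μ,p) ∈ E, β₂(μ,p) ≤ max_{i=1,...,s} β₂(μ_i,p_i). -/

import Mathlib

open MeasureTheory Real

/-- Standard normal density. -/
noncomputable def stdphi (t : ℝ) : ℝ := (Real.sqrt (2 * Real.pi))⁻¹ * Real.exp (-t ^ 2 / 2)

/-- Standard normal CDF. -/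
noncomputable def stdPhi (x : ℝ) : ℝ := ∫ t in Set.Iic x, stdphi t

/-- The type II error function β(n,η,μ,p). -/
noncomputable def betaFn (n : ℕ) (η μ p : ℝ) : ℝ :=
  ∑ k ∈ Finset.range (n + 1), (n.choose k : ℝ) * p ^ k * (1 - p) ^ (n - k) *
    stdPhi (Real.sqrt ((n : ℝ) / 2) * (η - (k : ℝ) * μ / n))

/-- The density-type function β_η(n,x,μ,p). -/
noncomputable def betaEta (n : ℕ) (x μ p : ℝ) : ℝ :=
  ∑ k ∈ Finset.range (n + 1), (n.choose k : ℝ) * p ^ k * (1 - p) ^ (n - k) *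
    (Real.sqrt ((n : ℝ) / 2) * stdphi (Real.sqrt ((n : ℝ) / 2) * (x - (k : ℝ) * μ / n)))

/-- The two-stage type II error probability β₂(μ,p). -/
noncomputable def beta2 (n₁ n₂ : ℕ) (η₀ η₁ η₂ μ p : ℝ) : ℝ :=
  betaFn n₁ η₀ μ p + ∫ x in η₀..η₁, betaEta n₁ x μ p *
    betaFn n₂ (((n₁ : ℝ) + n₂) / n₂ * η₂ - (n₁ : ℝ) / n₂ * x) μ p

/-! ### Basic facts about the standard normal density and CDF -/

lemma stdphi_nonneg (t : ℝ) : 0 ≤ stdphi t := by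
  unfold stdphi; positivity

lemma stdphi_eq (t : ℝ) : stdphi t = (Real.sqrt (2 * Real.pi))⁻¹ * Real.exp (-(1/2) * t ^ 2) := by
  unfold stdphi; ring_nf

lemma continuous_stdphi : Continuous stdphi := by
  unfold stdphi; fun_prop

lemma integrable_stdphi : Integrable stdphi := by
  have h := (integrable_exp_neg_mul_sq (by norm_num : (0:ℝ) < 1/2)).const_mul
    ((Real.sqrt (2 * Real.pi))⁻¹)
  refine h.congr (Filter.Eventually.of_forall fun t => ?_)
  rw [stdphi_eq]

lemma integral_stdphi : ∫ t, stdphi t = 1 := by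
  have : ∫ t, stdphi t = (Real.sqrt (2 * Real.pi))⁻¹ * ∫ t : ℝ, Real.exp (-(1/2) * t ^ 2) := by
    rw [← integral_const_mul]
    congr 1; ext t; rw [stdphi_eq]
  rw [this, integral_gaussian]
  rw [show π / (1/2 : ℝ) = 2 * π by ring]
  rw [inv_mul_cancel₀]
  positivity

lemma stdPhi_nonneg (x : ℝ) : 0 ≤ stdPhi x := by
  unfold stdPhi
  exact setIntegral_nonneg measurableSet_Iic (fun t _ => stdphi_nonneg t)

lemma stdPhi_le_one (x : ℝ) : stdPhi x ≤ 1 := by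
  unfold stdPhi
  rw [← integral_stdphi]
  exact setIntegral_le_integral integrable_stdphi
    (Filter.Eventually.of_forall stdphi_nonneg)

lemma stdPhi_mono : Monotone stdPhi := by
  intro x y hxy
  exact setIntegral_mono_set integrable_stdphi.integrableOn
    (Filter.Eventually.of_forall stdphi_nonneg)
    (HasSubset.Subset.eventuallyLE (Set.Iic_subset_Iic.mpr hxy))

lemma stdPhi_measurable : Measurable stdPhi := stdPhi_mono.measurable

lemma stdphi_le (t : ℝ) : stdphi t ≤ (Real.sqrt (2 * Real.pi))⁻¹ := by
  unfold stdphi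
  have h1 : Real.exp (-t^2/2) ≤ 1 := by
    rw [Real.exp_le_one_iff]; nlinarith [sq_nonneg t]
  have h2 : (0:ℝ) ≤ (Real.sqrt (2 * Real.pi))⁻¹ := by positivity
  nlinarith

/-! ### Binomial expectation sums -/

/-- Binomial expectation sum. -/
noncomputable def binomS (n : ℕ) (r : ℝ) (f : ℕ → ℝ) : ℝ :=
  ∑ k ∈ Finset.range (n + 1), (n.choose k : ℝ) * r ^ k * (1 - r) ^ (n - k) * f k

lemma binomS_succ (n : ℕ) (r : ℝ) (f : ℕ → ℝ) :
    binomS (n + 1) r f = (1 - r) * binomS n r f + r * binomS n r (fun k => f (k + 1)) := by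
  unfold binomS
  rw [Finset.sum_range_succ' (fun k => ((n+1).choose k : ℝ) * r ^ k * (1 - r) ^ (n + 1 - k) * f k) (n+1)]
  have h1 : ∀ k ∈ Finset.range (n + 1),
      ((n+1).choose (k+1) : ℝ) * r ^ (k+1) * (1 - r) ^ (n + 1 - (k+1)) * f (k+1)
      = (n.choose k : ℝ) * r ^ (k+1) * (1 - r) ^ (n - k) * f (k+1)
        + (n.choose (k+1) : ℝ) * r ^ (k+1) * (1 - r) ^ (n - k) * f (k+1) := by
    intro k hk
    have e : n + 1 - (k + 1) = n - k := by omega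
    rw [e, Nat.choose_succ_succ]
    push_cast
    ring
  rw [Finset.sum_congr rfl h1, Finset.sum_add_distrib]
  have h2 : ∑ k ∈ Finset.range (n+1), (n.choose (k+1) : ℝ) * r ^ (k+1) * (1 - r) ^ (n - k) * f (k+1)
      = ∑ k ∈ Finset.range n, (n.choose (k+1) : ℝ) * r ^ (k+1) * (1 - r) ^ (n - k) * f (k+1) := by
    rw [Finset.sum_range_succ]
    simp [Nat.choose_succ_self]
  have h4 : (1 - r) * binomS n r f
      = ∑ k ∈ Finset.range n, (n.choose (k+1) : ℝ) * r ^ (k+1) * (1 - r) ^ (n - k) * f (k+1)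
        + (1 - r) ^ (n+1) * f 0 := by
    unfold binomS
    rw [Finset.mul_sum, Finset.sum_range_succ' _ n]
    congr 1
    · apply Finset.sum_congr rfl
      intro k hk
      simp only [Finset.mem_range] at hk
      have : n - k = (n - (k+1)) + 1 := by omega
      rw [this]; ring
    · simp; ring
  have h3 : r * binomS n r (fun k => f (k+1))
      = ∑ k ∈ Finset.range (n+1), (n.choose k : ℝ) * r ^ (k+1) * (1 - r) ^ (n - k) * f (k+1) := by
    unfold binomS
    rw [Finset.mul_sum]
    apply Finset.sum_congr rfl
    intro k hk; ring
  have h0 : ((n+1).choose 0 : ℝ) * r ^ 0 * (1 - r) ^ (n + 1 - 0) * f 0 = (1 - r) ^ (n+1) * f 0 := by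
    simp
  rw [h2, h0]
  unfold binomS at h3 h4
  beta_reduce at h3 ⊢
  linarith [h3, h4]

lemma binomS_mono_f {n : ℕ} {r : ℝ} (hr0 : 0 ≤ r) (hr1 : r ≤ 1) {f g : ℕ → ℝ}
    (hfg : ∀ k, f k ≤ g k) : binomS n r f ≤ binomS n r g := by
  unfold binomS
  apply Finset.sum_le_sum
  intro k _
  have hw : (0:ℝ) ≤ (n.choose k : ℝ) * r ^ k * (1 - r) ^ (n - k) := by
    have : (0:ℝ) ≤ 1 - r := by linarith
    positivity
  exact mul_le_mul_of_nonneg_left (hfg k) hw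

lemma binomS_anti_p (n : ℕ) (f : ℕ → ℝ) (hf : Antitone f) :
    ∀ p q : ℝ, 0 ≤ p → p ≤ q → q ≤ 1 → binomS n q f ≤ binomS n p f := by
  induction n generalizing f with
  | zero =>
    intro p q _ _ _
    unfold binomS; simp
  | succ n ih =>
    intro p q hp0 hpq hq1
    rw [binomS_succ, binomS_succ]
    have hf' : Antitone (fun k => f (k + 1)) := fun a b hab => hf (by omega)
    have hA := ih f hf p q hp0 hpq hq1
    have hB := ih (fun k => f (k + 1)) hf' p q hp0 hpq hq1
    have hBA : binomS n p (fun k => f (k + 1)) ≤ binomS n p f :=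
      binomS_mono_f hp0 (by linarith) (fun k => hf (by omega))
    nlinarith [hA, hB, hBA]

lemma binomS_const (n : ℕ) (r : ℝ) (c : ℝ) : binomS n r (fun _ => c) = c := by
  unfold binomS
  have h := add_pow r (1 - r) n
  have h2 : (r + (1 - r)) ^ n = 1 := by norm_num
  rw [h2] at h
  calc ∑ k ∈ Finset.range (n + 1), (n.choose k : ℝ) * r ^ k * (1 - r) ^ (n - k) * c
      = (∑ k ∈ Finset.range (n + 1), r ^ k * (1 - r) ^ (n - k) * (n.choose k : ℝ)) * c := by
        rw [Finset.sum_mul]; apply Finset.sum_congr rfl; intro k _; ring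
    _ = c := by rw [← h]; ring

lemma binomS_nonneg {n : ℕ} {r : ℝ} (hr0 : 0 ≤ r) (hr1 : r ≤ 1) {f : ℕ → ℝ}
    (hf : ∀ k, 0 ≤ f k) : 0 ≤ binomS n r f := by
  have := binomS_mono_f (n := n) hr0 hr1 (f := fun _ => 0) (g := f) hf
  rwa [binomS_const] at this

lemma binomS_le_one {n : ℕ} {r : ℝ} (hr0 : 0 ≤ r) (hr1 : r ≤ 1) {f : ℕ → ℝ}
    (hf : ∀ k, f k ≤ 1) : binomS n r f ≤ 1 := by
  have := binomS_mono_f (n := n) hr0 hr1 (f := f) (g := fun _ => 1) hf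
  rwa [binomS_const] at this

lemma binomS_add (n : ℕ) (r : ℝ) (f g : ℕ → ℝ) :
    binomS n r (fun k => f k + g k) = binomS n r f + binomS n r g := by
  unfold binomS
  rw [← Finset.sum_add_distrib]
  apply Finset.sum_congr rfl
  intro k _; ring

/-! ### The core analytic comparison -/

/-- Piecewise acceptance function. -/
noncomputable def coreH (a m η₀ η₁ : ℝ) (G : ℝ → ℝ) (u : ℝ) : ℝ :=
  if u ≤ a * η₀ - a * m then 1 else if u ≤ a * η₁ - a * m then G (u / a + m) else 0

lemma coreH_measurable (a m η₀ η₁ : ℝ) {G : ℝ → ℝ} (hG : Measurable G) :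
    Measurable (coreH a m η₀ η₁ G) := by
  unfold coreH
  apply Measurable.ite (measurableSet_Iic) measurable_const
  apply Measurable.ite (measurableSet_Iic) _ measurable_const
  exact hG.comp ((measurable_id.div_const a).add_const m)

lemma coreH_nonneg {a m η₀ η₁ : ℝ} {G : ℝ → ℝ} (hG0 : ∀ x, 0 ≤ G x) (u : ℝ) :
    0 ≤ coreH a m η₀ η₁ G u := by
  unfold coreH; split_ifs <;> simp [hG0]

lemma coreH_le_one {a m η₀ η₁ : ℝ} {G : ℝ → ℝ} (hG1 : ∀ x, G x ≤ 1) (u : ℝ) :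
    coreH a m η₀ η₁ G u ≤ 1 := by
  unfold coreH; split_ifs <;> simp [hG1]

lemma integrable_phi_mul {K : ℝ → ℝ} (hK : Measurable K) (hK0 : ∀ x, 0 ≤ K x)
    (hK1 : ∀ x, K x ≤ 1) : Integrable (fun u => stdphi u * K u) := by
  apply Integrable.mono' integrable_stdphi
    ((continuous_stdphi.measurable.mul hK).aestronglyMeasurable)
  refine Filter.Eventually.of_forall fun u => ?_
  rw [Real.norm_eq_abs, Pi.mul_apply, abs_of_nonneg (mul_nonneg (stdphi_nonneg u) (hK0 u))]
  calc stdphi u * K u ≤ stdphi u * 1 :=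
        mul_le_mul_of_nonneg_left (hK1 u) (stdphi_nonneg u)
    _ = stdphi u := mul_one _

/-- Representation of the one-term two-stage error as a single integral. -/
lemma core_repr (a m η₀ η₁ : ℝ) (ha : 0 < a) (hη : η₀ ≤ η₁) {G : ℝ → ℝ}
    (hG : Measurable G) (hG0 : ∀ x, 0 ≤ G x) (hG1 : ∀ x, G x ≤ 1) :
    stdPhi (a * (η₀ - m)) + (∫ x in η₀..η₁, a * stdphi (a * (x - m)) * G x)
      = ∫ u, stdphi u * coreH a m η₀ η₁ G u := by
  set c₀ := a * η₀ - a * m with hc₀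
  set c₁ := a * η₁ - a * m with hc₁
  have hc : c₀ ≤ c₁ := by
    have := mul_le_mul_of_nonneg_left hη ha.le
    simp only [hc₀, hc₁]; linarith
  set F : ℝ → ℝ := fun u => stdphi u * G (u / a + m) with hF
  have hFmeas : Measurable F :=
    continuous_stdphi.measurable.mul (hG.comp ((measurable_id.div_const a).add_const m))
  have step1 : (∫ x in η₀..η₁, a * stdphi (a * (x - m)) * G x) = ∫ u in c₀..c₁, F u := by
    have e1 : ∀ x, a * stdphi (a * (x - m)) * G x = a * F (a * x - a * m) := by
      intro x
      have : (a * x - a * m) / a + m = x := by field_simp; ring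
      simp only [hF, this]
      ring_nf
    rw [intervalIntegral.integral_congr (g := fun x => a * F (a * x - a * m))
      (fun x _ => e1 x)]
    rw [intervalIntegral.integral_const_mul,
      intervalIntegral.integral_comp_mul_sub F ha.ne' (a * m)]
    rw [smul_eq_mul]
    rw [← mul_assoc, mul_inv_cancel₀ ha.ne', one_mul]
  rw [step1]
  have e2 : a * (η₀ - m) = c₀ := by rw [hc₀]; ring
  rw [e2, intervalIntegral.integral_of_le hc]
  have hI1 : Integrable (Set.indicator (Set.Iic c₀) stdphi) :=
    integrable_stdphi.indicator measurableSet_Iic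
  have hI2 : Integrable (Set.indicator (Set.Ioc c₀ c₁) F) :=
    (integrable_phi_mul (hG.comp ((measurable_id.div_const a).add_const m))
      (fun u => hG0 _) (fun u => hG1 _)).indicator measurableSet_Ioc
  have e3 : ∀ u, stdphi u * coreH a m η₀ η₁ G u
      = Set.indicator (Set.Iic c₀) stdphi u + Set.indicator (Set.Ioc c₀ c₁) F u := by
    intro u
    unfold coreH
    rw [← hc₀, ← hc₁]
    by_cases h1 : u ≤ c₀
    · rw [if_pos h1, Set.indicator_of_mem (Set.mem_Iic.mpr h1),
        Set.indicator_of_notMem (by simp [Set.mem_Ioc]; intro h; linarith), mul_one, add_zero]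
    · rw [if_neg h1, Set.indicator_of_notMem (by simpa using h1)]
      by_cases h2 : u ≤ c₁
      · rw [if_pos h2, Set.indicator_of_mem (Set.mem_Ioc.mpr ⟨lt_of_not_ge h1, h2⟩), zero_add]
      · rw [if_neg h2, Set.indicator_of_notMem (by simp [Set.mem_Ioc]; intro h; linarith),
          mul_zero, add_zero]
  rw [MeasureTheory.integral_congr_ae (Filter.Eventually.of_forall e3),
    MeasureTheory.integral_add hI1 hI2,
    MeasureTheory.integral_indicator measurableSet_Iic,
    MeasureTheory.integral_indicator measurableSet_Ioc]
  rfl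

/-- The key monotone comparison lemma. -/
lemma core_mono {a η₀ η₁ : ℝ} (ha : 0 < a) (hη : η₀ ≤ η₁) {G G' : ℝ → ℝ}
    (hGm : Measurable G) (hG'm : Measurable G') (hGanti : Antitone G)
    (hG0 : ∀ x, 0 ≤ G x) (hG1 : ∀ x, G x ≤ 1)
    (hG'0 : ∀ x, 0 ≤ G' x) (hG'1 : ∀ x, G' x ≤ 1)
    (hGG' : ∀ x, G' x ≤ G x) {m m' : ℝ} (hm : m ≤ m') :
    stdPhi (a * (η₀ - m')) + (∫ x in η₀..η₁, a * stdphi (a * (x - m')) * G' x)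
      ≤ stdPhi (a * (η₀ - m)) + (∫ x in η₀..η₁, a * stdphi (a * (x - m)) * G x) := by
  rw [core_repr a m' η₀ η₁ ha hη hG'm hG'0 hG'1,
    core_repr a m η₀ η₁ ha hη hGm hG0 hG1]
  apply integral_mono
  · exact integrable_phi_mul (coreH_measurable a m' η₀ η₁ hG'm)
      (coreH_nonneg hG'0) (coreH_le_one hG'1)
  · exact integrable_phi_mul (coreH_measurable a m η₀ η₁ hGm)
      (coreH_nonneg hG0) (coreH_le_one hG1)
  intro u
  apply mul_le_mul_of_nonneg_left _ (stdphi_nonneg u)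
  have hc₀ : a * η₀ - a * m' ≤ a * η₀ - a * m := by nlinarith
  have hc₁ : a * η₁ - a * m' ≤ a * η₁ - a * m := by nlinarith
  unfold coreH
  split_ifs with h1' h1 h2 h1 h2' h2 h2'
  · exact le_rfl
  · linarith
  · linarith
  · exact hG'1 _
  · calc G' (u / a + m') ≤ G (u / a + m') := hGG' _
      _ ≤ G (u / a + m) := hGanti (by gcongr)
  · linarith
  · norm_num
  · exact hG0 _
  · exact le_rfl

/-! ### betaFn facts -/

lemma betaFn_eq (n : ℕ) (η μ p : ℝ) :
    betaFn n η μ p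
      = binomS n p (fun k => stdPhi (Real.sqrt ((n : ℝ) / 2) * (η - (k : ℝ) * μ / n))) := rfl

lemma betaFn_nonneg {n : ℕ} {η μ p : ℝ} (hp0 : 0 ≤ p) (hp1 : p ≤ 1) :
    0 ≤ betaFn n η μ p := by
  rw [betaFn_eq]; exact binomS_nonneg hp0 hp1 (fun k => stdPhi_nonneg _)

lemma betaFn_le_one {n : ℕ} {η μ p : ℝ} (hp0 : 0 ≤ p) (hp1 : p ≤ 1) :
    betaFn n η μ p ≤ 1 := by
  rw [betaFn_eq]; exact binomS_le_one hp0 hp1 (fun k => stdPhi_le_one _)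

lemma betaFn_mono_eta {n : ℕ} {μ p : ℝ} (hp0 : 0 ≤ p) (hp1 : p ≤ 1) :
    Monotone (fun η => betaFn n η μ p) := by
  intro η η' hηη
  show betaFn n η μ p ≤ betaFn n η' μ p
  rw [betaFn_eq, betaFn_eq]
  apply binomS_mono_f hp0 hp1
  intro k
  exact stdPhi_mono (by nlinarith [Real.sqrt_nonneg ((n:ℝ)/2)])

lemma betaFn_anti_mu {n : ℕ} (hn : 1 ≤ n) {η p : ℝ} (hp0 : 0 ≤ p) (hp1 : p ≤ 1)
    {μ μ' : ℝ} (hμ : μ ≤ μ') : betaFn n η μ' p ≤ betaFn n η μ p := by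
  have hn' : (0:ℝ) < n := by exact_mod_cast hn
  rw [betaFn_eq, betaFn_eq]
  apply binomS_mono_f hp0 hp1
  intro k
  apply stdPhi_mono
  have h1 : (k : ℝ) * μ / n ≤ (k : ℝ) * μ' / n :=
    div_le_div_of_nonneg_right (mul_le_mul_of_nonneg_left hμ (Nat.cast_nonneg k)) hn'.le
  nlinarith [Real.sqrt_nonneg ((n:ℝ)/2)]

lemma betaFn_anti_p {n : ℕ} (hn : 1 ≤ n) {η μ : ℝ} (hμ : 0 ≤ μ)
    {p q : ℝ} (hp0 : 0 ≤ p) (hpq : p ≤ q) (hq1 : q ≤ 1) :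
    betaFn n η μ q ≤ betaFn n η μ p := by
  have hn' : (0:ℝ) < n := by exact_mod_cast hn
  rw [betaFn_eq, betaFn_eq]
  apply binomS_anti_p n _ ?_ p q hp0 hpq hq1
  intro k k' hkk'
  apply stdPhi_mono
  have h1 : (k : ℝ) * μ / n ≤ (k' : ℝ) * μ / n := by
    have hk : (k:ℝ) ≤ (k':ℝ) := by exact_mod_cast hkk'
    exact div_le_div_of_nonneg_right (mul_le_mul_of_nonneg_right hk hμ) hn'.le
  nlinarith [Real.sqrt_nonneg ((n:ℝ)/2)]

lemma betaFn_measurable_eta (n : ℕ) (μ p : ℝ) :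
    Measurable (fun η => betaFn n η μ p) := by
  apply Finset.measurable_sum
  intro k _
  exact (stdPhi_measurable.comp ((measurable_id.sub_const _).const_mul _)).const_mul _

/-! ### The second-stage factor -/

/-- The second-stage error as a function of the first-stage statistic. -/
noncomputable def Gfun (n₁ n₂ : ℕ) (η₂ μ p : ℝ) (x : ℝ) : ℝ :=
  betaFn n₂ (((n₁ : ℝ) + n₂) / n₂ * η₂ - (n₁ : ℝ) / n₂ * x) μ p

lemma Gfun_measurable (n₁ n₂ : ℕ) (η₂ μ p : ℝ) : Measurable (Gfun n₁ n₂ η₂ μ p) :=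
  (betaFn_measurable_eta n₂ μ p).comp
    ((measurable_id.const_mul ((n₁ : ℝ) / n₂)).const_sub _)

lemma Gfun_nonneg {n₁ n₂ : ℕ} {η₂ μ p : ℝ} (hp0 : 0 ≤ p) (hp1 : p ≤ 1) (x : ℝ) :
    0 ≤ Gfun n₁ n₂ η₂ μ p x := betaFn_nonneg hp0 hp1

lemma Gfun_le_one {n₁ n₂ : ℕ} {η₂ μ p : ℝ} (hp0 : 0 ≤ p) (hp1 : p ≤ 1) (x : ℝ) :
    Gfun n₁ n₂ η₂ μ p x ≤ 1 := betaFn_le_one hp0 hp1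

lemma Gfun_anti {n₁ n₂ : ℕ} {η₂ μ p : ℝ} (hp0 : 0 ≤ p) (hp1 : p ≤ 1) :
    Antitone (Gfun n₁ n₂ η₂ μ p) := by
  intro x x' hxx'
  unfold Gfun
  apply betaFn_mono_eta hp0 hp1
  have hd : (0:ℝ) ≤ (n₁ : ℝ) / n₂ := by positivity
  nlinarith

lemma Gfun_anti_mu {n₁ n₂ : ℕ} (hn₂ : 1 ≤ n₂) {η₂ p : ℝ} (hp0 : 0 ≤ p) (hp1 : p ≤ 1)
    {μ μ' : ℝ} (hμ : μ ≤ μ') (x : ℝ) :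
    Gfun n₁ n₂ η₂ μ' p x ≤ Gfun n₁ n₂ η₂ μ p x := betaFn_anti_mu hn₂ hp0 hp1 hμ

lemma Gfun_anti_p {n₁ n₂ : ℕ} (hn₂ : 1 ≤ n₂) {η₂ μ : ℝ} (hμ : 0 ≤ μ)
    {p q : ℝ} (hp0 : 0 ≤ p) (hpq : p ≤ q) (hq1 : q ≤ 1) (x : ℝ) :
    Gfun n₁ n₂ η₂ μ q x ≤ Gfun n₁ n₂ η₂ μ p x := betaFn_anti_p hn₂ hμ hp0 hpq hq1

/-! ### Decomposition of β₂ -/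

lemma intervalIntegrable_of_bounded {f : ℝ → ℝ} (hf : Measurable f) {B : ℝ}
    (hB : ∀ x, ‖f x‖ ≤ B) (A b : ℝ) : IntervalIntegrable f volume A b := by
  rw [intervalIntegrable_iff]
  apply Integrable.mono' (g := fun _ => B) ?_ hf.aestronglyMeasurable.restrict
    (Filter.Eventually.of_forall hB)
  rw [Set.uIoc]
  exact integrableOn_const measure_Ioc_lt_top.ne

lemma beta2_repr (n₁ n₂ : ℕ) (η₀ η₁ η₂ μ p : ℝ) (hp0 : 0 ≤ p) (hp1 : p ≤ 1) :
    beta2 n₁ n₂ η₀ η₁ η₂ μ p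
      = binomS n₁ p (fun k =>
          stdPhi (Real.sqrt ((n₁ : ℝ) / 2) * (η₀ - (k : ℝ) * μ / n₁))
          + ∫ x in η₀..η₁, Real.sqrt ((n₁ : ℝ) / 2)
              * stdphi (Real.sqrt ((n₁ : ℝ) / 2) * (x - (k : ℝ) * μ / n₁))
              * Gfun n₁ n₂ η₂ μ p x) := by
  have hGmeas := Gfun_measurable n₁ n₂ η₂ μ p
  have hG0 := fun x => Gfun_nonneg (n₁ := n₁) (n₂ := n₂) (η₂ := η₂) (μ := μ) hp0 hp1 x
  have hG1 := fun x => Gfun_le_one (n₁ := n₁) (n₂ := n₂) (η₂ := η₂) (μ := μ) hp0 hp1 x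
  rw [binomS_add]
  show betaFn n₁ η₀ μ p + (∫ x in η₀..η₁, betaEta n₁ x μ p * Gfun n₁ n₂ η₂ μ p x) = _
  rw [betaFn_eq n₁ η₀ μ p]
  congr 1
  have hswap : (∫ x in η₀..η₁, betaEta n₁ x μ p * Gfun n₁ n₂ η₂ μ p x)
      = ∑ k ∈ Finset.range (n₁+1),
          ∫ x in η₀..η₁, (n₁.choose k : ℝ) * p ^ k * (1-p) ^ (n₁-k)
            * (Real.sqrt ((n₁ : ℝ) / 2)
              * stdphi (Real.sqrt ((n₁ : ℝ) / 2) * (x - (k:ℝ)*μ/n₁))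
              * Gfun n₁ n₂ η₂ μ p x) := by
    rw [← intervalIntegral.integral_finset_sum]
    · apply intervalIntegral.integral_congr
      intro x _
      beta_reduce
      unfold betaEta
      rw [Finset.sum_mul]
      apply Finset.sum_congr rfl
      intro k _
      ring
    · intro k _
      apply intervalIntegrable_of_bounded
        (B := |(n₁.choose k : ℝ) * p ^ k * (1-p) ^ (n₁-k)|
          * (Real.sqrt ((n₁ : ℝ) / 2) * (Real.sqrt (2*Real.pi))⁻¹))
      · exact (((continuous_stdphi.measurable.comp
          ((measurable_id.sub_const _).const_mul _)).const_mul _).mul hGmeas).const_mul _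
      · intro x
        rw [Real.norm_eq_abs, abs_mul]
        apply mul_le_mul_of_nonneg_left ?_ (abs_nonneg _)
        rw [abs_mul]
        have h1 : |Real.sqrt ((n₁ : ℝ) / 2) * stdphi (Real.sqrt ((n₁ : ℝ) / 2) * (x - (k:ℝ)*μ/n₁))|
            ≤ Real.sqrt ((n₁ : ℝ) / 2) * (Real.sqrt (2*Real.pi))⁻¹ := by
          rw [abs_of_nonneg (mul_nonneg (Real.sqrt_nonneg _) (stdphi_nonneg _))]
          exact mul_le_mul_of_nonneg_left (stdphi_le _) (Real.sqrt_nonneg _)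
        have h2 : |Gfun n₁ n₂ η₂ μ p x| ≤ 1 := abs_le.mpr ⟨by linarith [hG0 x], hG1 x⟩
        calc |Real.sqrt ((n₁ : ℝ) / 2) * stdphi (Real.sqrt ((n₁ : ℝ) / 2) * (x - (k:ℝ)*μ/n₁))|
              * |Gfun n₁ n₂ η₂ μ p x|
            ≤ (Real.sqrt ((n₁ : ℝ) / 2) * (Real.sqrt (2*Real.pi))⁻¹) * 1 :=
              mul_le_mul h1 h2 (abs_nonneg _) (by positivity)
          _ = Real.sqrt ((n₁ : ℝ) / 2) * (Real.sqrt (2*Real.pi))⁻¹ := mul_one _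
  rw [hswap]
  unfold binomS
  apply Finset.sum_congr rfl
  intro k _
  rw [intervalIntegral.integral_const_mul]

/-! ### Monotonicity of β₂ -/

lemma beta2_anti (n₁ n₂ : ℕ) (hn₁ : 1 ≤ n₁) (hn₂ : 1 ≤ n₂) (η₀ η₁ η₂ : ℝ) (hη : η₀ ≤ η₁)
    {μ₀ μ p₀ p : ℝ} (hμ₀ : 0 < μ₀) (hμ : μ₀ ≤ μ) (hp₀ : 0 < p₀) (hp : p₀ ≤ p) (hp1 : p ≤ 1) :
    beta2 n₁ n₂ η₀ η₁ η₂ μ p ≤ beta2 n₁ n₂ η₀ η₁ η₂ μ₀ p₀ := by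
  have hn₁' : (0:ℝ) < n₁ := by exact_mod_cast hn₁
  have ha : 0 < Real.sqrt ((n₁ : ℝ) / 2) := Real.sqrt_pos.mpr (by positivity)
  have hp0 : 0 ≤ p := by linarith
  have hp₀0 : 0 ≤ p₀ := hp₀.le
  have hp₀1 : p₀ ≤ 1 := by linarith
  set a := Real.sqrt ((n₁ : ℝ) / 2) with ha_def
  -- measurability / bounds of the three G's involved
  have hm := fun (ν q : ℝ) => Gfun_measurable n₁ n₂ η₂ ν q
  rw [beta2_repr n₁ n₂ η₀ η₁ η₂ μ p hp0 hp1,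
    beta2_repr n₁ n₂ η₀ η₁ η₂ μ₀ p₀ hp₀0 hp₀1]
  have hmdiv : ∀ (k : ℕ) {ν ν' : ℝ}, ν ≤ ν' → (k:ℝ) * ν / n₁ ≤ (k:ℝ) * ν' / n₁ := by
    intro k ν ν' hν
    exact div_le_div_of_nonneg_right (mul_le_mul_of_nonneg_left hν (Nat.cast_nonneg k)) hn₁'.le
  -- Step A : decrease μ to μ₀ at fixed p
  have stepA : binomS n₁ p (fun k => stdPhi (a * (η₀ - (k:ℝ)*μ/n₁))
        + ∫ x in η₀..η₁, a * stdphi (a * (x - (k:ℝ)*μ/n₁)) * Gfun n₁ n₂ η₂ μ p x)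
      ≤ binomS n₁ p (fun k => stdPhi (a * (η₀ - (k:ℝ)*μ₀/n₁))
        + ∫ x in η₀..η₁, a * stdphi (a * (x - (k:ℝ)*μ₀/n₁)) * Gfun n₁ n₂ η₂ μ₀ p x) := by
    apply binomS_mono_f hp0 hp1
    intro k
    exact core_mono ha hη (hm μ₀ p) (hm μ p) (Gfun_anti hp0 hp1)
      (Gfun_nonneg hp0 hp1) (Gfun_le_one hp0 hp1)
      (Gfun_nonneg hp0 hp1) (Gfun_le_one hp0 hp1)
      (Gfun_anti_mu hn₂ hp0 hp1 hμ) (hmdiv k hμ)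
  -- Step B1 : decrease p to p₀ inside the second stage
  have stepB1 : binomS n₁ p (fun k => stdPhi (a * (η₀ - (k:ℝ)*μ₀/n₁))
        + ∫ x in η₀..η₁, a * stdphi (a * (x - (k:ℝ)*μ₀/n₁)) * Gfun n₁ n₂ η₂ μ₀ p x)
      ≤ binomS n₁ p (fun k => stdPhi (a * (η₀ - (k:ℝ)*μ₀/n₁))
        + ∫ x in η₀..η₁, a * stdphi (a * (x - (k:ℝ)*μ₀/n₁)) * Gfun n₁ n₂ η₂ μ₀ p₀ x) := by
    apply binomS_mono_f hp0 hp1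
    intro k
    exact core_mono ha hη (hm μ₀ p₀) (hm μ₀ p) (Gfun_anti hp₀0 hp₀1)
      (Gfun_nonneg hp₀0 hp₀1) (Gfun_le_one hp₀0 hp₀1)
      (Gfun_nonneg hp0 hp1) (Gfun_le_one hp0 hp1)
      (Gfun_anti_p hn₂ hμ₀.le hp₀0 hp hp1) le_rfl
  -- Step B2 : decrease the outer p to p₀
  have stepB2 : binomS n₁ p (fun k => stdPhi (a * (η₀ - (k:ℝ)*μ₀/n₁))
        + ∫ x in η₀..η₁, a * stdphi (a * (x - (k:ℝ)*μ₀/n₁)) * Gfun n₁ n₂ η₂ μ₀ p₀ x)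
      ≤ binomS n₁ p₀ (fun k => stdPhi (a * (η₀ - (k:ℝ)*μ₀/n₁))
        + ∫ x in η₀..η₁, a * stdphi (a * (x - (k:ℝ)*μ₀/n₁)) * Gfun n₁ n₂ η₂ μ₀ p₀ x) := by
    apply binomS_anti_p n₁ _ ?_ p₀ p hp₀0 hp hp1
    intro k k' hkk'
    have hk : (k:ℝ) ≤ (k':ℝ) := by exact_mod_cast hkk'
    have hmm : (k:ℝ) * μ₀ / n₁ ≤ (k':ℝ) * μ₀ / n₁ :=
      div_le_div_of_nonneg_right (mul_le_mul_of_nonneg_right hk hμ₀.le) hn₁'.le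
    exact core_mono ha hη (hm μ₀ p₀) (hm μ₀ p₀) (Gfun_anti hp₀0 hp₀1)
      (Gfun_nonneg hp₀0 hp₀1) (Gfun_le_one hp₀0 hp₀1)
      (Gfun_nonneg hp₀0 hp₀1) (Gfun_le_one hp₀0 hp₀1)
      (fun x => le_rfl) hmm
  calc _ ≤ _ := stepA
    _ ≤ _ := stepB1
    _ ≤ _ := stepB2

/-- (Lemma 3) On a region of strong effect, the two-stage type II error probability `β₂`
is maximized at one of the corners `(μ_i, p_i)`. -/
theorem beta2_max_on_strong_effect (n₁ n₂ : ℕ) (hn₁ : 1 ≤ n₁) (hn₂ : 1 ≤ n₂)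
    (η₀ η₁ η₂ : ℝ) (hη : η₀ ≤ η₁)
    (s : ℕ) (hs : 1 ≤ s) (μs : Fin s → ℝ) (ps : Fin (s + 1) → ℝ)
    (hμanti : StrictAnti μs) (hμpos : ∀ i, 0 < μs i)
    (hpmono : StrictMono ps) (hp0 : 0 < ps 0) (hplast : ps (Fin.last s) = 1)
    (E : Set (ℝ × ℝ))
    (hE : E = {q : ℝ × ℝ | ∃ i : Fin s,
      ps i.castSucc ≤ q.2 ∧ q.2 ≤ ps i.succ ∧ μs i ≤ q.1}) :
    ∀ q ∈ E, ∃ i : Fin s,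
      beta2 n₁ n₂ η₀ η₁ η₂ q.1 q.2 ≤ beta2 n₁ n₂ η₀ η₁ η₂ (μs i) (ps i.castSucc) := by
  intro q hq
  rw [hE] at hq
  obtain ⟨i, hq1, hq2, hq3⟩ := hq
  refine ⟨i, ?_⟩
  have hp₀ : 0 < ps i.castSucc := lt_of_lt_of_le hp0 (hpmono.monotone (Fin.zero_le _))
  have hq21 : q.2 ≤ 1 := by
    calc q.2 ≤ ps i.succ := hq2
      _ ≤ ps (Fin.last s) := hpmono.monotone (Fin.le_last _)
      _ = 1 := hplast
  exact beta2_anti n₁ n₂ hn₁ hn₂ η₀ η₁ η₂ hη (hμpos i) hq3 hp₀ hq1 hq21
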